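/- Consider minimizing x^T A_0 x over x ∈ ℝ^n subject to x^T A_i x ⊴_i c_i for i = 1,...,m (each ⊴_i being ≤ or =), where A_0,...,A_m are real symmetric and c ∈ ℝ^m. Suppose there exist real numbers μ̃_1,...,μ̃_m with μ̃_i > 0 whenever ⊴_i is ≤, such that Z̃ := A_0 + Σ_{i=1}^m μ̃_i A_i is positive definite. If x_0 is feasible, then the level set {x feasible : x^T A_0 x ≤ x_0^T A_0 x_0} is closed and bounded. -/

import Mathlib

open Matrix

lemma quad_cont (n : ℕ) (Z : Matrix (Fin n) (Fin n) ℝ) :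
    Continuous fun x : Fin n → ℝ => x ⬝ᵥ Z.mulVec x := by
  simp only [dotProduct, Matrix.mulVec]
  fun_prop

lemma quad_smul (n : ℕ) (Z : Matrix (Fin n) (Fin n) ℝ) (c : ℝ) (x : Fin n → ℝ) :
    (c • x) ⬝ᵥ Z.mulVec (c • x) = c * c * (x ⬝ᵥ Z.mulVec x) := by
  rw [Matrix.mulVec_smul, dotProduct_smul, smul_dotProduct]
  simp [smul_eq_mul]; ring

lemma quad_lower (n : ℕ) (Z : Matrix (Fin n) (Fin n) ℝ) (hZ : Z.PosDef) :
    ∃ ε > 0, ∀ x : Fin n → ℝ, ε * ‖x‖ ^ 2 ≤ x ⬝ᵥ Z.mulVec x := by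
  by_cases hS : (Metric.sphere (0 : Fin n → ℝ) 1).Nonempty
  · have hc : IsCompact (Metric.sphere (0 : Fin n → ℝ) 1) := isCompact_sphere 0 1
    obtain ⟨u, hu, hmin⟩ := hc.exists_isMinOn hS ((quad_cont n Z).continuousOn)
    have hu1 : ‖u‖ = 1 := by simpa using hu
    have hune : u ≠ 0 := by intro h; rw [h] at hu1; simp at hu1
    refine ⟨u ⬝ᵥ Z.mulVec u, by simpa using hZ.dotProduct_mulVec_pos hune, fun x => ?_⟩
    rcases eq_or_ne x 0 with rfl | hx
    · simp
    · have hnx : (0:ℝ) < ‖x‖ := norm_pos_iff.mpr hx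
      have hmem : ‖x‖⁻¹ • x ∈ Metric.sphere (0 : Fin n → ℝ) 1 := by
        simp [norm_smul, abs_of_pos (inv_pos.mpr hnx), inv_mul_cancel₀ hnx.ne']
      have := hmin hmem
      simp only [Set.mem_setOf_eq, quad_smul] at this
      calc (u ⬝ᵥ Z.mulVec u) * ‖x‖ ^ 2 ≤ (‖x‖⁻¹ * ‖x‖⁻¹ * (x ⬝ᵥ Z.mulVec x)) * ‖x‖^2 := by
              nlinarith [sq_nonneg ‖x‖]
        _ = x ⬝ᵥ Z.mulVec x := by field_simp
  · refine ⟨1, one_pos, fun x => ?_⟩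
    rcases eq_or_ne x 0 with rfl | hx
    · simp
    · refine absurd ⟨‖x‖⁻¹ • x, ?_⟩ hS
      simp [norm_smul, abs_of_pos (norm_pos_iff.mpr hx),
        inv_mul_cancel₀ (norm_pos_iff.mpr hx).ne']

theorem stmt_4 (n m : ℕ) (A₀ : Matrix (Fin n) (Fin n) ℝ)
    (A : Fin m → Matrix (Fin n) (Fin n) ℝ) (c : Fin m → ℝ)
    (hA₀ : A₀.IsSymm) (hA : ∀ i, (A i).IsSymm)
    (isIneq : Fin m → Bool)
    (μ : Fin m → ℝ) (hμ : ∀ i, isIneq i = true → 0 < μ i)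
    (hZ : (A₀ + ∑ i, μ i • A i).PosDef)
    (feasible : (Fin n → ℝ) → Prop)
    (hfeas : ∀ x, feasible x ↔ ∀ i,
      if isIneq i then x ⬝ᵥ (A i).mulVec x ≤ c i else x ⬝ᵥ (A i).mulVec x = c i)
    (x₀ : Fin n → ℝ) (hx₀ : feasible x₀) :
    IsClosed {x | feasible x ∧ x ⬝ᵥ A₀.mulVec x ≤ x₀ ⬝ᵥ A₀.mulVec x₀} ∧
    Bornology.IsBounded {x | feasible x ∧ x ⬝ᵥ A₀.mulVec x ≤ x₀ ⬝ᵥ A₀.mulVec x₀} := by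
  have hset : {x | feasible x ∧ x ⬝ᵥ A₀.mulVec x ≤ x₀ ⬝ᵥ A₀.mulVec x₀} =
      (⋂ i, {x : Fin n → ℝ | if isIneq i then x ⬝ᵥ (A i).mulVec x ≤ c i
        else x ⬝ᵥ (A i).mulVec x = c i}) ∩
      {x | x ⬝ᵥ A₀.mulVec x ≤ x₀ ⬝ᵥ A₀.mulVec x₀} := by
    ext x
    simp [hfeas x, Set.mem_iInter, and_comm]
  constructor
  · rw [hset]
    refine IsClosed.inter (isClosed_iInter fun i => ?_)
      (isClosed_le (quad_cont n A₀) continuous_const)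
    cases h : isIneq i <;> simp only [h, if_true, if_false, Bool.false_eq_true]
    · exact isClosed_eq (quad_cont n (A i)) continuous_const
    · exact isClosed_le (quad_cont n (A i)) continuous_const
  · obtain ⟨ε, hε, hlow⟩ := quad_lower n (A₀ + ∑ i, μ i • A i) hZ
    set C₀ : ℝ := x₀ ⬝ᵥ A₀.mulVec x₀ + ∑ i, μ i * c i with hC₀
    rw [isBounded_iff_forall_norm_le]
    refine ⟨Real.sqrt (C₀ / ε), fun x hx => ?_⟩
    obtain ⟨hxf, hxle⟩ := hx
    have hexp : x ⬝ᵥ (A₀ + ∑ i, μ i • A i).mulVec x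
        = x ⬝ᵥ A₀.mulVec x + ∑ i, μ i * (x ⬝ᵥ (A i).mulVec x) := by
      rw [Matrix.add_mulVec, dotProduct_add]
      congr 1
      induction (Finset.univ : Finset (Fin m)) using Finset.induction with
      | empty => simp
      | insert _ _ h ih =>
        rw [Finset.sum_insert h, Finset.sum_insert h, Matrix.add_mulVec,
          dotProduct_add, ih, Matrix.smul_mulVec,
          dotProduct_smul, smul_eq_mul]
    have hsum : ∑ i, μ i * (x ⬝ᵥ (A i).mulVec x) ≤ ∑ i, μ i * c i := by
      refine Finset.sum_le_sum fun i _ => ?_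
      have := (hfeas x).mp hxf i
      cases h : isIneq i
      · rw [h] at this; simp only [Bool.false_eq_true, if_false] at this
        rw [this]
      · rw [h] at this; simp only [if_true] at this
        exact mul_le_mul_of_nonneg_left this (hμ i h).le
    have hbound : x ⬝ᵥ (A₀ + ∑ i, μ i • A i).mulVec x ≤ C₀ := by
      rw [hexp, hC₀]; exact add_le_add hxle hsum
    have h1 : ε * ‖x‖ ^ 2 ≤ C₀ := le_trans (hlow x) hbound
    have h2 : ‖x‖ ^ 2 ≤ C₀ / ε := (le_div_iff₀ hε).mpr (by linarith [h1])
    exact (Real.le_sqrt (norm_nonneg x) (le_trans (sq_nonneg _) h2)).mpr h2
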